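/- If G is a graph with γ_g(G) = 2, then for every edge e of G, γ_g(G−e) ≤ 3. -/
import Mathlib


open Classical

noncomputable section

namespace DomGame

variable {V : Type*} [Fintype V]

/-- Closed neighborhood of `v` as a `Finset`. -/
noncomputable def N (G : SimpleGraph V) (v : V) : Finset V :=
  Finset.univ.filter (fun u => G.Adj v u ∨ u = v)

/-- Legal moves given the set `S` of already dominated vertices. -/
noncomputable def moves (G : SimpleGraph V) (S : Finset V) : Finset V :=
  Finset.univ.filter (fun v => ¬ N G v ⊆ S)

lemma card_lt {G : SimpleGraph V} {S : Finset V} (v : V) (hv : v ∈ moves G S) :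
    (Finset.univ \ (S ∪ N G v)).card < (Finset.univ \ S).card := by
  simp only [moves, Finset.mem_filter] at hv
  obtain ⟨u, hu, hus⟩ := Finset.not_subset.mp hv.2
  apply Finset.card_lt_card
  refine ⟨Finset.sdiff_subset_sdiff (le_refl _) Finset.subset_union_left, ?_⟩
  intro hsub
  have := hsub (Finset.mem_sdiff.mpr ⟨Finset.mem_univ u, hus⟩)
  rw [Finset.mem_sdiff, Finset.mem_union] at this
  exact this.2 (Or.inr hu)

mutual
/-- Number of moves with optimal play when it is Dominator's turn and
`S` is the set of already dominated vertices. -/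
noncomputable def gameD (G : SimpleGraph V) (S : Finset V) : ℕ :=
  if h : (moves G S).Nonempty then
    1 + (moves G S).attach.inf' (by simpa using h)
      (fun v => gameS G (S ∪ N G v.1))
  else 0
termination_by (Finset.univ \ S).card
decreasing_by exact card_lt v.1 v.2

/-- Number of moves with optimal play when it is Staller's turn. -/
noncomputable def gameS (G : SimpleGraph V) (S : Finset V) : ℕ :=
  if h : (moves G S).Nonempty then
    1 + (moves G S).attach.sup' (by simpa using h)
      (fun v => gameD G (S ∪ N G v.1))
  else 0
termination_by (Finset.univ \ S).card
decreasing_by exact card_lt v.1 v.2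
end

/-- The (Dominator-start) game domination number. -/
noncomputable def gammaG (G : SimpleGraph V) : ℕ := gameD G ∅

/-- The Staller-start game domination number. -/
noncomputable def gammaG' (G : SimpleGraph V) : ℕ := gameS G ∅

end DomGame

open DomGame Finset

section Helpers

variable {V : Type*} [Fintype V]

lemma mem_N {G : SimpleGraph V} {w x : V} : x ∈ N G w ↔ G.Adj w x ∨ x = w := by
  simp [N]

lemma self_mem_N (G : SimpleGraph V) (w : V) : w ∈ N G w := mem_N.mpr (Or.inr rfl)

lemma mem_moves_iff {G : SimpleGraph V} {S : Finset V} {v : V} :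
    v ∈ moves G S ↔ ¬ N G v ⊆ S := by
  simp [moves]

lemma N_delete_subset (G : SimpleGraph V) (s : Set (Sym2 V)) (w : V) :
    N (G.deleteEdges s) w ⊆ N G w := by
  intro x hx
  rw [mem_N] at hx ⊢
  rcases hx with h | h
  · exact Or.inl (SimpleGraph.deleteEdges_adj.mp h).1
  · exact Or.inr h

lemma mem_N_delete {G : SimpleGraph V} {a b w x : V}
    (hx : x ∈ N G w) (h1 : ¬(w = a ∧ x = b)) (h2 : ¬(w = b ∧ x = a)) :
    x ∈ N (G.deleteEdges {s(a,b)}) w := by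
  rw [mem_N] at hx ⊢
  rcases hx with h | h
  · refine Or.inl ?_
    rw [SimpleGraph.deleteEdges_adj]
    refine ⟨h, ?_⟩
    simp only [Set.mem_singleton_iff, Sym2.eq_iff]
    tauto
  · exact Or.inr h

lemma gameD_le {G : SimpleGraph V} {S : Finset V} {v : V} (hv : v ∈ moves G S) :
    gameD G S ≤ 1 + gameS G (S ∪ N G v) := by
  rw [gameD.eq_def, dif_pos ⟨v, hv⟩]
  exact Nat.add_le_add_left
    (Finset.inf'_le (fun w : {x // x ∈ moves G S} => gameS G (S ∪ N G w.1))
      (Finset.mem_attach _ ⟨v, hv⟩)) 1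

lemma gameS_le {G : SimpleGraph V} {S : Finset V} {n : ℕ}
    (h : ∀ v ∈ moves G S, gameD G (S ∪ N G v) ≤ n) : gameS G S ≤ 1 + n := by
  rw [gameS.eq_def]
  split_ifs with hne
  · exact Nat.add_le_add_left (Finset.sup'_le _ _ fun w _ => h w.1 w.2) 1
  · omega

lemma gameS_lower {G : SimpleGraph V} {S : Finset V} {v : V} (hv : v ∈ moves G S) :
    1 + gameD G (S ∪ N G v) ≤ gameS G S := by
  rw [gameS.eq_def, dif_pos ⟨v, hv⟩]
  exact Nat.add_le_add_left
    (Finset.le_sup' (fun w : {x // x ∈ moves G S} => gameD G (S ∪ N G w.1))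
      (Finset.mem_attach _ ⟨v, hv⟩)) 1

lemma exists_of_gameD {G : SimpleGraph V} {S : Finset V} (h : (moves G S).Nonempty) :
    ∃ v ∈ moves G S, gameD G S = 1 + gameS G (S ∪ N G v) := by
  rw [gameD.eq_def, dif_pos h]
  obtain ⟨⟨v, hv⟩, -, heq⟩ :=
    Finset.exists_mem_eq_inf' (s := (moves G S).attach) (by simpa using h)
      (fun w => gameS G (S ∪ N G w.1))
  exact ⟨v, hv, congrArg (1 + ·) heq⟩

lemma univ_of_gameD_eq_zero {G : SimpleGraph V} {S : Finset V} (h : gameD G S = 0) :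
    S = Finset.univ := by
  rw [gameD.eq_def] at h
  split_ifs at h with hne
  · omega
  · rw [Finset.not_nonempty_iff_eq_empty] at hne
    apply Finset.eq_univ_of_forall
    intro x
    by_contra hx
    have hxm : x ∈ moves G S :=
      mem_moves_iff.mpr (fun hsub => hx (hsub (self_mem_N G x)))
    simp [hne] at hxm

lemma key_lemma {G : SimpleGraph V} (hG : gameD G (∅ : Finset V) = 2) :
    ∃ v : V, ∀ u, ¬ N G u ⊆ N G v → N G v ∪ N G u = Finset.univ := by
  have hne : (moves G (∅ : Finset V)).Nonempty := by
    by_contra h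
    rw [gameD.eq_def, dif_neg h] at hG
    omega
  obtain ⟨v, hv, heq⟩ := exists_of_gameD hne
  rw [Finset.empty_union] at heq
  refine ⟨v, fun u hu => ?_⟩
  have hlow := gameS_lower (mem_moves_iff.mpr hu)
  exact univ_of_gameD_eq_zero (G := G) (by omega)

lemma claim_lemma {G : SimpleGraph V} {a b v : V} (hab : G.Adj a b) (hv : v ≠ b)
    (H : ∀ u, ¬ N G u ⊆ N G v → N G v ∪ N G u = Finset.univ)
    {u z y : V}
    (hu : ¬ N (G.deleteEdges {s(a,b)}) u ⊆ N (G.deleteEdges {s(a,b)}) v)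
    (hz : z ∉ N (G.deleteEdges {s(a,b)}) v ∪ N (G.deleteEdges {s(a,b)}) u)
    (hy : y ∉ N (G.deleteEdges {s(a,b)}) v ∪ N (G.deleteEdges {s(a,b)}) u) :
    y ∈ N (G.deleteEdges {s(a,b)}) z := by
  set G' := G.deleteEdges {s(a,b)} with hG'
  have hne : a ≠ b := hab.ne
  by_cases hva : v = a
  · subst hva
    have hbmem : b ∈ N G v := mem_N.mpr (Or.inl hab)
    have hNa : ∀ x, x ∈ N G v → x ≠ b → x ∈ N G' v := fun x hx hxb =>
      mem_N_delete hx (fun h => hxb h.2) (fun h => hne h.1)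
    by_cases hbS : b ∈ N G' v ∪ N G' u
    · have hS2 : ∀ x, x ∈ N G v → x ∈ N G' v ∪ N G' u := by
        intro x hx
        by_cases hxb : x = b
        · rw [hxb]; exact hbS
        · exact Finset.mem_union_left _ (hNa x hx hxb)
      have hzNa : z ∉ N G v := fun h => hz (hS2 _ h)
      have hyNa : y ∉ N G v := fun h => hy (hS2 _ h)
      have hza : z ≠ v := fun h => hzNa (h ▸ self_mem_N G v)
      have hzb : z ≠ b := fun h => hzNa (h ▸ hbmem)
      have hNz : ¬ N G z ⊆ N G v := fun h => hzNa (h (self_mem_N G z))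
      have hyNz : y ∈ N G z := by
        have hy2 : y ∈ N G v ∪ N G z := (H z hNz) ▸ Finset.mem_univ y
        rcases Finset.mem_union.mp hy2 with h | h
        · exact absurd h hyNa
        · exact h
      exact mem_N_delete hyNz (fun h => hza h.1) (fun h => hzb h.1)
    · -- b is not dominated; every undominated vertex equals b
      obtain ⟨t, htu, hta⟩ := Finset.not_subset.mp hu
      have htb : t ≠ b := fun h => hbS (Finset.mem_union_right _ (h ▸ htu))
      have htNa : t ∉ N G v := fun h => hta (hNa t h htb)
      have hNu : ¬ N G u ⊆ N G v := fun h => htNa (h (N_delete_subset _ _ _ htu))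
      have huniv := H u hNu
      have key1 : ∀ x, x ∉ N G' v ∪ N G' u → x = b := by
        intro x hxS
        by_contra hxb
        have hxU : x ∈ N G v ∪ N G u := huniv ▸ Finset.mem_univ x
        rcases Finset.mem_union.mp hxU with h | h
        · exact hxS (Finset.mem_union_left _ (hNa x h hxb))
        · refine hxS (Finset.mem_union_right _ (mem_N_delete h (fun h' => hxb h'.2) ?_))
          rintro ⟨hub, hxa⟩
          exact hxS (Finset.mem_union_left _ (hxa ▸ self_mem_N G' v))
      rw [key1 y hy, key1 z hz]
      exact self_mem_N _ _
  · -- v ∉ {a, b}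
    have hNv : N G' v = N G v := by
      apply Finset.Subset.antisymm (N_delete_subset _ _ _)
      intro x hx
      exact mem_N_delete hx (fun h => hva h.1) (fun h => hv h.1)
    have hNu : ¬ N G u ⊆ N G v := by
      intro h
      exact hu (hNv ▸ (N_delete_subset G {s(a,b)} u).trans h)
    have huniv := H u hNu
    have keyz : ∀ x, x ∉ N G' v ∪ N G' u → (u = a ∧ x = b) ∨ (u = b ∧ x = a) := by
      intro x hxS
      have hxv : x ∉ N G v := fun h => hxS (Finset.mem_union_left _ (hNv ▸ h))
      have hxu : x ∈ N G u := by
        have hx2 : x ∈ N G v ∪ N G u := huniv ▸ Finset.mem_univ x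
        rcases Finset.mem_union.mp hx2 with h | h
        · exact absurd h hxv
        · exact h
      have hxu' : x ∉ N G' u := fun h => hxS (Finset.mem_union_right _ h)
      by_contra hc
      push_neg at hc
      exact hxu' (mem_N_delete hxu (fun h => hc.1 h.1 h.2) (fun h => hc.2 h.1 h.2))
    rcases keyz z hz with ⟨h1, h2⟩ | ⟨h1, h2⟩ <;> rcases keyz y hy with ⟨h3, h4⟩ | ⟨h3, h4⟩
    · rw [h2, h4]; exact self_mem_N _ _
    · exact absurd (h1.symm.trans h3) hne
    · exact absurd (h3.symm.trans h1) hne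
    · rw [h2, h4]; exact self_mem_N _ _

end Helpers


open DomGame in
/-- If `γ_g(G) = 2`, then `γ_g(G−e) ≤ 3` for every edge `e`. -/
theorem gameD_two_edge_removal {V : Type*} [Fintype V] (G : SimpleGraph V)
    (hG : gammaG G = 2) (e : Sym2 V) (he : e ∈ G.edgeSet) :
    gammaG (G.deleteEdges {e}) ≤ 3 := by
  induction e using Sym2.ind with
  | _ a b =>
  rw [SimpleGraph.mem_edgeSet] at he
  have hne : a ≠ b := he.ne
  obtain ⟨v, H⟩ := key_lemma (G := G) hG
  set G' := G.deleteEdges {s(a,b)} with hG'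
  -- the unified claim, covering the case v = b by symmetry
  have hclaim : ∀ u z y, ¬ N G' u ⊆ N G' v → z ∉ N G' v ∪ N G' u →
      y ∉ N G' v ∪ N G' u → y ∈ N G' z := by
    by_cases hvb : v = b
    · intro u z y hu hz hy
      have hswap : ({s(a,b)} : Set (Sym2 V)) = {s(b,a)} := by rw [Sym2.eq_swap]
      rw [hvb] at hu hz hy H
      rw [hG', hswap] at hu hz hy ⊢
      exact claim_lemma he.symm hne.symm H hu hz hy
    · intro u z y hu hz hy
      rw [hG'] at hu hz hy ⊢
      exact claim_lemma he hvb H hu hz hy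
  show gameD G' ∅ ≤ 3
  by_cases h0 : (moves G' (∅ : Finset V)).Nonempty
  · have hv0 : v ∈ moves G' (∅ : Finset V) :=
      mem_moves_iff.mpr (fun hsub => by simpa using hsub (self_mem_N G' v))
    have step1 := gameD_le hv0
    rw [Finset.empty_union] at step1
    have step2 : gameS G' (N G' v) ≤ 1 + 1 := by
      apply gameS_le
      intro u hu
      have huleg : ¬ N G' u ⊆ N G' v := mem_moves_iff.mp hu
      by_cases h1 : (moves G' (N G' v ∪ N G' u)).Nonempty
      · obtain ⟨x, hx⟩ := h1
        obtain ⟨z, hzx, hzS⟩ := Finset.not_subset.mp (mem_moves_iff.mp hx)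
        have hzm : z ∈ moves G' (N G' v ∪ N G' u) :=
          mem_moves_iff.mpr (fun hsub => hzS (hsub (self_mem_N G' z)))
        have step3 := gameD_le hzm
        have hzero : gameS G' ((N G' v ∪ N G' u) ∪ N G' z) = 0 := by
          rw [gameS.eq_def, dif_neg]
          rw [Finset.nonempty_iff_ne_empty, ne_eq, not_not]
          rw [Finset.eq_empty_iff_forall_notMem]
          intro w hw
          obtain ⟨t, htw, htS⟩ := Finset.not_subset.mp (mem_moves_iff.mp hw)
          rw [Finset.mem_union] at htS
          push_neg at htS
          exact htS.2 (hclaim u z t huleg hzS htS.1)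
        omega
      · rw [gameD.eq_def, dif_neg h1]
        omega
    omega
  · rw [gameD.eq_def, dif_neg h0]
    omega
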